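/- arXiv:2402.17528 — 5 statements merged into one kernel-verified Lean document; each statement's English description precedes it below -/
import Mathlib

section
/- Let $v, t$ be positive integers and $\mathfrak{B}$ a family of subsets of $\{1,\dots,v\}$. Suppose for each $i \in \{0,1,\dots,t\}$ there exists $\mu_i$ such that $\mu_{\mathfrak{B}}(\beta) = \mu_i$ for all $i$-element subsets $\beta$ of $\{1,\dots,v\}$, where $\mu_{\mathfrak{B}}(\beta)$ is the number of members of $\mathfrak{B}$ disjoint from $\beta$. Then for each $i \le t$ and each $i$-element subset $\beta$, the number $\lambda_{\mathfrak{B}}(\beta)$ of members of $\mathfrak{B}$ containing $\beta$ equals $\sum_{j=0}^{i} (-1)^j \binom{i}{j} \mu_j$. In particular, $\lambda_{\mathfrak{B}}(\beta)$ depends only on $|\beta|$, so $(\{1,\dots,v\},\mathfrak{B})$ is a $t$-design (with possibly varying block sizes). -/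
open Finset

/-- If for each `i ≤ t` the number of blocks disjoint from an `i`-set is a constant `μ i`,
then the number of blocks containing any `i`-set is `∑_{j=0}^{i} (-1)^j (i choose j) μ j`;
in particular it depends only on `i`, so the family is a `t`-design. -/
theorem lambda_of_constant_mu (v t : ℕ) (ht : 0 < t) (B : Finset (Finset (Fin v)))
    (μ : ℕ → ℕ)
    (hμ : ∀ i ≤ t, ∀ β : Finset (Fin v), β.card = i →
      (B.filter fun a => Disjoint β a).card = μ i) :
    ∀ i ≤ t, ∀ β : Finset (Fin v), β.card = i →
      (((B.filter fun a => β ⊆ a).card : ℤ)) =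
        ∑ j ∈ Finset.range (i + 1), (-1 : ℤ) ^ j * (i.choose j : ℤ) * (μ j : ℤ) := by
  intro i hi β hβ
  -- Step 1: inclusion-exclusion indicator identity
  have key : ∀ a : Finset (Fin v), (if β ⊆ a then (1:ℤ) else 0) =
      ∑ γ ∈ β.powerset, (-1:ℤ)^γ.card * (if Disjoint γ a then 1 else 0) := by
    intro a
    have h1 : ∀ γ ∈ β.powerset, ((-1:ℤ)^γ.card * (if Disjoint γ a then 1 else 0)) =
        if γ ∈ (β \ a).powerset then (-1:ℤ)^γ.card else 0 := by
      intro γ hγ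
      rw [mem_powerset] at hγ
      by_cases h : Disjoint γ a
      · rw [if_pos h, if_pos, mul_one]
        rw [mem_powerset, subset_sdiff]
        exact ⟨hγ, h⟩
      · rw [if_neg h, if_neg, mul_zero]
        rw [mem_powerset, subset_sdiff]
        exact fun hc => h hc.2
    rw [Finset.sum_congr rfl h1, Finset.sum_ite_mem,
      Finset.inter_eq_right.mpr (Finset.powerset_mono.mpr (sdiff_subset)),
      Finset.sum_powerset_neg_one_pow_card]
    simp [Finset.sdiff_eq_empty_iff_subset]
  have h2 : (((B.filter fun a => β ⊆ a).card : ℤ)) =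
      ∑ a ∈ B, (if β ⊆ a then (1:ℤ) else 0) := by
    rw [Finset.sum_boole]
  rw [h2]
  simp_rw [key]
  rw [Finset.sum_comm]
  have h3 : ∀ γ ∈ β.powerset,
      (∑ a ∈ B, (-1:ℤ)^γ.card * (if Disjoint γ a then 1 else 0)) =
        (-1:ℤ)^γ.card * (μ γ.card : ℤ) := by
    intro γ hγ
    rw [mem_powerset] at hγ
    rw [← Finset.mul_sum, Finset.sum_boole]
    have := hμ γ.card (le_trans (hβ ▸ card_le_card hγ) hi) γ rfl
    rw [this]
  rw [Finset.sum_congr rfl h3, Finset.powerset_card_disjiUnion]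
  erw [Finset.sum_disjiUnion]
  rw [hβ]
  refine Finset.sum_congr rfl fun j hj => ?_
  have : ∀ γ ∈ Finset.powersetCard j β, (-1:ℤ)^γ.card * (μ γ.card : ℤ)
      = (-1:ℤ)^j * (μ j : ℤ) := by
    intro γ hγ
    rw [(mem_powersetCard.mp hγ).2]
  rw [Finset.sum_congr rfl this, Finset.sum_const, Finset.card_powersetCard, hβ, nsmul_eq_mul]
  push_cast
  ring
end

section
/- Let $t, v, k$ be positive integers and $A$ a $v \times v$ complex matrix such that: (1) the set of $k \times k$ principal minors of $A$ is exactly $\{a, b\}$ with $a \neq b$; (2) for each $i \in \{0,1,\dots,t\}$, the coefficient of $x^{v-k-i}$ in $\det(xI - A[\bar\beta])$ is the same constant $c_i$ for all $i$-element subsets $\beta$ of $\{1,\dots,v\}$. Then the family $\mathfrak{B} = \{\alpha \subseteq \{1,\dots,v\} : |\alpha| = k, \det(A[\alpha]) = a\}$ is the block set of a $t$-$(v,k,\lambda)$ design, i.e., every $t$-element subset of $\{1,\dots,v\}$ is contained in exactly $\lambda$ members of $\mathfrak{B}$, where $\lambda = \frac{(-1)^k \binom{k}{t}}{(a-b)\binom{v}{t}}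 c_0 - \frac{b}{a-b}\binom{v-t}{k-t}$. -/
open Matrix Finset Polynomial
open scoped Classical

/-- The principal submatrix of `A` with rows and columns indexed by `s`. -/
noncomputable def principalSub {R : Type*} {n : ℕ} (A : Matrix (Fin n) (Fin n) R)
    (s : Finset (Fin n)) : Matrix s s R :=
  A.submatrix (fun i => (i : Fin n)) (fun i => (i : Fin n))

noncomputable def psub {m : Type*} (M : Matrix m m ℂ) (s : Finset m) : Matrix s s ℂ :=
  M.submatrix (fun i => (i : m)) (fun i => (i : m))

lemma det_piecewise_one {m : Type*} [Fintype m] [DecidableEq m]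
    (B : Matrix m m ℂ[X]) (s : Finset m) :
    (Matrix.of (s.piecewise (fun i => (1 : Matrix m m ℂ[X]) i) (fun i => B i))).det
      = (B.submatrix (fun i : {x // x ∉ s} => (i : m)) (fun i : {x // x ∉ s} => (i : m))).det := by
  set N := Matrix.of (s.piecewise (fun i => (1 : Matrix m m ℂ[X]) i) (fun i => B i)) with hN
  let e := Equiv.sumCompl (fun x => x ∈ s)
  have hsub : N.submatrix e e =
      Matrix.fromBlocks 1 0
        (B.submatrix (fun i : {x // x ∉ s} => (i : m)) (fun i : {x // x ∈ s} => (i : m)))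
        (B.submatrix (fun i : {x // x ∉ s} => (i : m)) (fun i : {x // x ∉ s} => (i : m))) := by
    refine Matrix.ext fun i j => ?_
    cases i with
    | inl i =>
      cases j with
      | inl j =>
        simp only [submatrix_apply, e, Equiv.sumCompl_apply_inl, hN, Matrix.of_apply,
          Finset.piecewise_eq_of_mem _ _ _ i.2, fromBlocks_apply₁₁, Matrix.one_apply]
        simp only [Subtype.ext_iff]
      | inr j =>
        have : (i : m) ≠ (j : m) := fun h => j.2 (h ▸ i.2)
        simp [hN, e, Equiv.sumCompl_apply_inl, Equiv.sumCompl_apply_inr, Finset.piecewise_eq_of_mem _ _ _ i.2, Matrix.one_apply, this]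
    | inr i =>
      cases j with
      | inl j =>
        simp [hN, e, Equiv.sumCompl_apply_inl, Equiv.sumCompl_apply_inr, Finset.piecewise_eq_of_notMem _ _ _ i.2]
      | inr j =>
        simp [hN, e, Equiv.sumCompl_apply_inl, Equiv.sumCompl_apply_inr, Finset.piecewise_eq_of_notMem _ _ _ i.2]
  rw [← Matrix.det_submatrix_equiv_self e N, hsub, Matrix.det_fromBlocks_zero₁₂]
  simp

lemma charpoly_eq_sum {m : Type*} [Fintype m] [DecidableEq m] (M : Matrix m m ℂ) :
    M.charpoly = ∑ s : Finset m,
      Polynomial.C ((-1 : ℂ) ^ (sᶜ.card) * (psub M sᶜ).det) * X ^ s.card := by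
  classical
  have hadd : (charmatrix M : Matrix m m ℂ[X]) =
      Matrix.of ((fun i => (X : ℂ[X]) • (1 : Matrix m m ℂ[X]) i) +
        (fun i => (-(M.map Polynomial.C)) i)) := by
    ext i j
    by_cases h : i = j
    · subst h; simp [charmatrix_apply_eq, Matrix.one_apply, sub_eq_add_neg]
    · simp [charmatrix_apply_ne _ _ _ h, Matrix.one_apply_ne h]
  have hdet : M.charpoly = (Matrix.detRowAlternating (n := m) (R := ℂ[X]))
      ((fun i => (X : ℂ[X]) • (1 : Matrix m m ℂ[X]) i) +
        (fun i => (-(M.map Polynomial.C)) i)) := by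
    rw [Matrix.charpoly, hadd]; rfl
  have hexp := (Matrix.detRowAlternating (n := m) (R := ℂ[X])).toMultilinearMap.map_add_univ
    (fun i => (X : ℂ[X]) • (1 : Matrix m m ℂ[X]) i) (fun i => (-(M.map Polynomial.C)) i)
  rw [hdet]
  refine Eq.trans hexp ?_
  refine Finset.sum_congr rfl fun s _ => ?_
  -- compute the term for s
  set b : m → m → ℂ[X] := fun i => (-(M.map Polynomial.C)) i with hb
  set m0 : m → m → ℂ[X] := s.piecewise (fun i => (1 : Matrix m m ℂ[X]) i) b with hm0
  have hpw : s.piecewise (fun i => (X : ℂ[X]) • (1 : Matrix m m ℂ[X]) i) b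
      = s.piecewise (fun i => (X : ℂ[X]) • m0 i) m0 := by
    funext i
    by_cases hi : i ∈ s
    · simp [Finset.piecewise_eq_of_mem _ _ _ hi, hm0]
    · simp [Finset.piecewise_eq_of_notMem _ _ _ hi, hm0]
  rw [hpw, (Matrix.detRowAlternating (n := m) (R := ℂ[X])).toMultilinearMap.map_piecewise_smul
    (fun _ => (X : ℂ[X])) m0 s]
  have hm0det : (Matrix.detRowAlternating (n := m) (R := ℂ[X])).toMultilinearMap m0
      = ((-1 : ℂ[X]) ^ (sᶜ.card)) * Polynomial.C ((psub M sᶜ).det) := by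
    have h1 : (Matrix.detRowAlternating (n := m) (R := ℂ[X])).toMultilinearMap m0
        = (Matrix.of (s.piecewise (fun i => (1 : Matrix m m ℂ[X]) i)
            (fun i => (-(M.map Polynomial.C)) i))).det := rfl
    rw [h1, det_piecewise_one]
    have h2 : ((-(M.map Polynomial.C)).submatrix
          (fun i : {x // x ∉ s} => (i : m)) (fun i : {x // x ∉ s} => (i : m)))
        = -(((M.submatrix (fun i : {x // x ∉ s} => (i : m))
            (fun i : {x // x ∉ s} => (i : m)))).map Polynomial.C) := by
      ext i j; simp
    rw [h2, Matrix.det_neg]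
    have h3 : ((M.submatrix (fun i : {x // x ∉ s} => (i : m))
        (fun i : {x // x ∉ s} => (i : m))).map ⇑(Polynomial.C)).det
        = Polynomial.C ((M.submatrix (fun i : {x // x ∉ s} => (i : m))
            (fun i : {x // x ∉ s} => (i : m))).det) := by
      rw [← RingHom.mapMatrix_apply, ← RingHom.map_det]
    rw [h3]
    have hcard : Fintype.card {x // x ∉ s} = sᶜ.card := by
      rw [Finset.card_compl]
      simp [Fintype.card_subtype_compl, Fintype.card_coe]
    have hdet2 : (M.submatrix (fun i : {x // x ∉ s} => (i : m))
        (fun i : {x // x ∉ s} => (i : m))).det = (psub M sᶜ).det := by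
      let e2 : ↥(sᶜ) ≃ {x // x ∉ s} := Equiv.subtypeEquivRight (fun x => Finset.mem_compl)
      have : psub M sᶜ = (M.submatrix (fun i : {x // x ∉ s} => (i : m))
          (fun i : {x // x ∉ s} => (i : m))).submatrix e2 e2 := by
        ext i j; rfl
      rw [this, Matrix.det_submatrix_equiv_self]
    rw [hdet2, hcard]
  rw [hm0det]
  simp only [Finset.prod_const, smul_eq_mul]
  simp only [Polynomial.C_mul, Polynomial.C_pow, Polynomial.C_neg, Polynomial.C_1]
  ring

lemma charpoly_coeff_minors {m : Type*} [Fintype m] [DecidableEq m]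
    (M : Matrix m m ℂ) {j : ℕ} (hj : j ≤ Fintype.card m) :
    M.charpoly.coeff (Fintype.card m - j)
      = (-1 : ℂ) ^ j * ∑ u ∈ powersetCard j (univ : Finset m), (psub M u).det := by
  classical
  set n := Fintype.card m with hn
  rw [charpoly_eq_sum M]
  rw [Polynomial.finset_sum_coeff]
  have hterm : ∀ s : Finset m,
      (Polynomial.C ((-1 : ℂ) ^ (sᶜ.card) * (psub M sᶜ).det) * X ^ s.card).coeff (n - j)
      = if n - j = s.card then (-1 : ℂ) ^ (sᶜ.card) * (psub M sᶜ).det else 0 := by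
    intro s
    rw [Polynomial.coeff_C_mul, Polynomial.coeff_X_pow]
    split_ifs <;> simp
  rw [Finset.sum_congr rfl fun s _ => hterm s, ← Finset.sum_filter]
  rw [Finset.mul_sum]
  refine Finset.sum_bij' (fun s _ => sᶜ) (fun u _ => uᶜ) ?_ ?_ ?_ ?_ ?_
  · intro s hs
    simp only [Finset.mem_filter, Finset.mem_univ, true_and] at hs
    rw [Finset.mem_powersetCard]
    refine ⟨Finset.subset_univ _, ?_⟩
    rw [Finset.card_compl, ← hs, ← hn]
    omega
  · intro u hu
    rw [Finset.mem_powersetCard] at hu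
    simp only [Finset.mem_filter, Finset.mem_univ, true_and]
    rw [Finset.card_compl, hu.2, hn]
  · intro s _; simp
  · intro u _; simp
  · intro s hs
    simp only [Finset.mem_filter, Finset.mem_univ, true_and] at hs
    have : sᶜ.card = j := by
      rw [Finset.card_compl, ← hs, ← hn]; omega
    rw [this]

lemma det_psub_map {α : Type*} [DecidableEq α] (M : Matrix α α ℂ) (s : Finset α)
    (u : Finset ↥s) :
    (psub (psub M s) u).det = (psub M (u.map (Function.Embedding.subtype _))).det := by
  classical
  set w := u.map (Function.Embedding.subtype _) with hw
  let g : ↥u → ↥w := fun x => ⟨x.1.1, by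
    rw [hw, Finset.mem_map]; exact ⟨x.1, x.2, rfl⟩⟩
  have hg : Function.Bijective g := by
    constructor
    · intro x y hxy
      apply Subtype.ext; apply Subtype.ext
      exact congrArg (fun z : ↥w => z.1) hxy
    · intro y
      have hy : (y : α) ∈ u.map (Function.Embedding.subtype _) := by rw [← hw]; exact y.2
      obtain ⟨x, hx, hxy⟩ := Finset.mem_map.mp hy
      exact ⟨⟨x, hx⟩, Subtype.ext hxy⟩
  let e := Equiv.ofBijective g hg
  have : psub (psub M s) u = (psub M w).submatrix e e := by
    ext x y; rfl
  rw [this, Matrix.det_submatrix_equiv_self]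

lemma sum_minors_transfer {α : Type*} [Fintype α] [DecidableEq α]
    (M : Matrix α α ℂ) (s : Finset α) (k : ℕ) :
    ∑ u ∈ powersetCard k (univ : Finset ↥s), (psub (psub M s) u).det
      = ∑ w ∈ powersetCard k s, (psub M w).det := by
  classical
  refine Finset.sum_bij' (fun u _ => u.map (Function.Embedding.subtype _))
    (fun w _ => w.subtype (· ∈ s)) ?_ ?_ ?_ ?_ ?_
  · intro u hu
    rw [Finset.mem_powersetCard] at hu ⊢
    constructor
    · intro x hx
      obtain ⟨y, _, rfl⟩ := Finset.mem_map.mp hx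
      exact y.2
    · rw [Finset.card_map]; exact hu.2
  · intro w hw
    rw [Finset.mem_powersetCard] at hw
    rw [Finset.mem_powersetCard]
    refine ⟨Finset.subset_univ _, ?_⟩
    have := Finset.subtype_map_of_mem (fun x hx => hw.1 hx)
    calc (w.subtype (· ∈ s)).card
        = ((w.subtype (· ∈ s)).map (Function.Embedding.subtype _)).card :=
          (Finset.card_map _).symm
      _ = w.card := by rw [this]
      _ = k := hw.2
  · intro u _
    ext x
    simp only [Finset.mem_subtype, Finset.mem_map, Function.Embedding.coe_subtype]
    constructor
    · rintro ⟨y, hy, hxy⟩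
      rwa [← Subtype.ext hxy.symm] at hy
    · intro hx; exact ⟨x, hx, rfl⟩
  · intro w hw
    rw [Finset.mem_powersetCard] at hw
    exact Finset.subtype_map_of_mem (fun x hx => hw.1 hx)
  · intro u _
    exact det_psub_map M s u

lemma card_supersets {α : Type*} [Fintype α] [DecidableEq α]
    (β : Finset α) (k : ℕ) (htk : β.card ≤ k) :
    ((powersetCard k (univ : Finset α)).filter (fun s => β ⊆ s)).card
      = (Fintype.card α - β.card).choose (k - β.card) := by
  classical
  have : ((powersetCard k (univ : Finset α)).filter (fun s => β ⊆ s)).card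
      = (powersetCard (k - β.card) βᶜ).card := by
    refine Finset.card_bij' (fun s _ => s \ β) (fun u _ => u ∪ β) ?_ ?_ ?_ ?_
    · intro s hs
      simp only [Finset.mem_filter, Finset.mem_powersetCard] at hs
      rw [Finset.mem_powersetCard]
      refine ⟨?_, ?_⟩
      · intro x hx
        rw [Finset.mem_compl]
        exact (Finset.mem_sdiff.mp hx).2
      · rw [Finset.card_sdiff_of_subset hs.2, hs.1.2]
    · intro u hu
      rw [Finset.mem_powersetCard] at hu
      have hdisj : Disjoint u β := by
        rw [Finset.disjoint_left]
        intro x hx hxβ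
        exact (Finset.mem_compl.mp (hu.1 hx)) hxβ
      simp only [Finset.mem_filter, Finset.mem_powersetCard]
      refine ⟨⟨Finset.subset_univ _, ?_⟩, Finset.subset_union_right⟩
      rw [Finset.card_union_of_disjoint hdisj, hu.2]
      omega
    · intro s hs
      simp only [Finset.mem_filter] at hs
      exact Finset.sdiff_union_of_subset hs.2
    · intro u hu
      rw [Finset.mem_powersetCard] at hu
      have hdisj : Disjoint u β := by
        rw [Finset.disjoint_left]
        intro x hx hxβ
        exact (Finset.mem_compl.mp (hu.1 hx)) hxβ
      show (u ∪ β) \ β = u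
      rw [Finset.union_sdiff_distrib, Finset.sdiff_self, Finset.union_empty,
        Finset.sdiff_eq_self_of_disjoint hdisj]
  rw [this, Finset.card_powersetCard, Finset.card_compl]

lemma neg_one_pow_sum {α : Type*} [DecidableEq α] (x : Finset α) :
    ∑ δ ∈ x.powerset, (-1 : ℂ) ^ δ.card = if x = ∅ then 1 else 0 := by
  have h := Finset.sum_powerset_neg_one_pow_card (x := x)
  have h2 : ((∑ δ ∈ x.powerset, (-1 : ℤ) ^ δ.card : ℤ) : ℂ)
      = ((if x = ∅ then (1 : ℤ) else 0 : ℤ) : ℂ) := by rw [h]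
  push_cast at h2
  simpa using h2

/-- Main theorem: if the `k × k` principal minors of `A` take exactly the two values
`a ≠ b`, and for each `i ≤ t` the coefficient of `x^{v-k-i}` in the characteristic
polynomial of every principal `(v-i) × (v-i)` submatrix of `A` is a constant `c i`, then
the `k`-subsets `α` with `det A[α] = a` form a `t`-`(v,k,λ)` design with
`λ = (-1)^k (k choose t) c₀ / ((a-b)(v choose t)) - b (v-t choose k-t)/(a-b)`. -/
theorem design_from_matrix {v t k : ℕ} (ht : 0 < t) (hk : 0 < k) (hv : 0 < v)
    (A : Matrix (Fin v) (Fin v) ℂ) (a b : ℂ) (hab : a ≠ b) (c : ℕ → ℂ)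
    (h1 : (Finset.powersetCard k (Finset.univ : Finset (Fin v))).image
        (fun s => (principalSub A s).det) = {a, b})
    (h2 : ∀ i ≤ t, ∀ β : Finset (Fin v), β.card = i →
      (principalSub A βᶜ).charpoly.coeff (v - k - i) = c i) :
    ∀ β : Finset (Fin v), β.card = t →
      ((((Finset.powersetCard k (Finset.univ : Finset (Fin v))).filter
          fun s => β ⊆ s ∧ (principalSub A s).det = a).card : ℂ)) =
        ((-1 : ℂ) ^ k * (k.choose t : ℂ)) / ((a - b) * (v.choose t : ℂ)) * c 0 -
          b / (a - b) * ((v - t).choose (k - t) : ℂ) := by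
  intro β hβ
  set f : Finset (Fin v) → ℂ := fun s => (principalSub A s).det with hf
  have hmem : ∀ α ∈ powersetCard k (univ : Finset (Fin v)), f α = a ∨ f α = b := by
    intro α hα
    have : f α ∈ ({a, b} : Finset ℂ) := by
      rw [← h1]; exact Finset.mem_image_of_mem _ hα
    simpa using this
  obtain ⟨αa, hαa, hfa⟩ : ∃ α ∈ powersetCard k (univ : Finset (Fin v)), f α = a := by
    have ha' : a ∈ ({a, b} : Finset ℂ) := by simp
    rw [← h1] at ha'
    obtain ⟨α, hα, hα2⟩ := Finset.mem_image.mp ha'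
    exact ⟨α, hα, hα2⟩
  obtain ⟨αb, hαb, hfb⟩ : ∃ α ∈ powersetCard k (univ : Finset (Fin v)), f α = b := by
    have hb' : b ∈ ({a, b} : Finset ℂ) := by simp
    rw [← h1] at hb'
    obtain ⟨α, hα, hα2⟩ := Finset.mem_image.mp hb'
    exact ⟨α, hα, hα2⟩
  have hkv : k ≤ v := by
    have h1' := (Finset.mem_powersetCard.mp hαa).2
    have h2' := Finset.card_le_univ αa
    rw [Fintype.card_fin] at h2'
    omega
  have key : ∀ γ : Finset (Fin v), γ.card ≤ t → k + γ.card ≤ v →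
      ∑ α ∈ powersetCard k γᶜ, f α = (-1 : ℂ) ^ k * c γ.card := by
    intro γ hγt hγv
    have hcard : Fintype.card ↥(γᶜ : Finset (Fin v)) = v - γ.card := by
      rw [Fintype.card_coe, Finset.card_compl, Fintype.card_fin]
    have hA := charpoly_coeff_minors (psub A γᶜ) (j := k) (by rw [hcard]; omega)
    rw [hcard] at hA
    have hidx : v - γ.card - k = v - k - γ.card := by omega
    rw [hidx] at hA
    have hcoeff := h2 γ.card hγt γ rfl
    have hps : principalSub A γᶜ = psub A γᶜ := rfl
    rw [hps] at hcoeff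
    rw [hcoeff] at hA
    rw [sum_minors_transfer A γᶜ k] at hA
    have hsq : (-1 : ℂ) ^ k * (-1 : ℂ) ^ k = 1 := by
      rw [← pow_add]; exact Even.neg_one_pow ⟨k, rfl⟩
    calc ∑ α ∈ powersetCard k γᶜ, f α
        = ∑ w ∈ powersetCard k γᶜ, (psub A w).det := rfl
      _ = ((-1 : ℂ) ^ k * (-1 : ℂ) ^ k) * ∑ w ∈ powersetCard k γᶜ, (psub A w).det := by
          rw [hsq, one_mul]
      _ = (-1 : ℂ) ^ k * ((-1 : ℂ) ^ k * ∑ w ∈ powersetCard k γᶜ, (psub A w).det) := by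
          rw [mul_assoc]
      _ = (-1 : ℂ) ^ k * c γ.card := by rw [← hA]
  have htkv : t + k < v := by
    by_contra hcon
    push_neg at hcon
    have hconst : ∀ α ∈ powersetCard k (univ : Finset (Fin v)),
        f α = (-1 : ℂ) ^ k * c (v - k) := by
      intro α hα
      obtain ⟨hαu, hαc⟩ := Finset.mem_powersetCard.mp hα
      have hcc : (αᶜ : Finset (Fin v)).card = v - k := by
        rw [Finset.card_compl, hαc, Fintype.card_fin]
      have hkey := key αᶜ (by omega) (by omega)
      rw [compl_compl, hcc] at hkey
      have hsingle : powersetCard k α = {α} := by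
        rw [← hαc]; exact Finset.powersetCard_self α
      rw [hsingle, Finset.sum_singleton] at hkey
      exact hkey
    have ha' := hconst αa hαa
    have hb' := hconst αb hαb
    rw [hfa] at ha'; rw [hfb] at hb'
    exact hab (ha'.trans hb'.symm)
  have hU : ∀ γ : Finset (Fin v), γ.card ≤ t →
      ∑ α ∈ (powersetCard k (univ : Finset (Fin v))).filter (fun α => γ ⊆ α), f α
        = ∑ jj ∈ range (γ.card + 1),
            ((γ.card.choose jj : ℂ)) * ((-1 : ℂ) ^ jj * ((-1 : ℂ) ^ k * c jj)) := by
    intro γ hγ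
    have hfilter : ∀ δ : Finset (Fin v), powersetCard k δᶜ
        = (powersetCard k (univ : Finset (Fin v))).filter (fun α => α ⊆ δᶜ) := by
      intro δ; ext α
      simp only [Finset.mem_powersetCard, Finset.mem_filter]
      constructor
      · intro h; exact ⟨⟨Finset.subset_univ _, h.2⟩, h.1⟩
      · intro h; exact ⟨h.2, h.1.2⟩
    have swap : ∑ δ ∈ γ.powerset, (-1 : ℂ) ^ δ.card * ∑ α ∈ powersetCard k δᶜ, f α
        = ∑ α ∈ (powersetCard k (univ : Finset (Fin v))).filter (fun α => γ ⊆ α), f α := by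
      calc ∑ δ ∈ γ.powerset, (-1 : ℂ) ^ δ.card * ∑ α ∈ powersetCard k δᶜ, f α
          = ∑ δ ∈ γ.powerset, ∑ α ∈ powersetCard k (univ : Finset (Fin v)),
              (if α ⊆ δᶜ then (-1 : ℂ) ^ δ.card * f α else 0) := by
            refine Finset.sum_congr rfl fun δ _ => ?_
            rw [Finset.mul_sum, hfilter δ, Finset.sum_filter]
        _ = ∑ α ∈ powersetCard k (univ : Finset (Fin v)), ∑ δ ∈ γ.powerset,
              (if α ⊆ δᶜ then (-1 : ℂ) ^ δ.card * f α else 0) := Finset.sum_comm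
        _ = ∑ α ∈ powersetCard k (univ : Finset (Fin v)),
              (if γ ⊆ α then f α else 0) := by
            refine Finset.sum_congr rfl fun α _ => ?_
            have hps : γ.powerset.filter (fun δ => α ⊆ δᶜ) = (γ \ α).powerset := by
              ext δ
              simp only [Finset.mem_filter, Finset.mem_powerset, Finset.subset_sdiff]
              constructor
              · rintro ⟨h1', h2'⟩
                exact ⟨h1', le_compl_iff_disjoint_left.mp h2'⟩
              · rintro ⟨h1', h2'⟩
                exact ⟨h1', le_compl_iff_disjoint_left.mpr h2'⟩
            calc ∑ δ ∈ γ.powerset, (if α ⊆ δᶜ then (-1 : ℂ) ^ δ.card * f α else 0)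
                = ∑ δ ∈ γ.powerset.filter (fun δ => α ⊆ δᶜ), (-1 : ℂ) ^ δ.card * f α :=
                  (Finset.sum_filter _ _).symm
              _ = ∑ δ ∈ (γ \ α).powerset, (-1 : ℂ) ^ δ.card * f α := by rw [hps]
              _ = (∑ δ ∈ (γ \ α).powerset, (-1 : ℂ) ^ δ.card) * f α := by
                  rw [Finset.sum_mul]
              _ = (if γ \ α = ∅ then 1 else 0) * f α := by rw [neg_one_pow_sum]
              _ = if γ ⊆ α then f α else 0 := by
                  by_cases h : γ ⊆ α
                  · rw [if_pos h, if_pos (Finset.sdiff_eq_empty_iff_subset.mpr h), one_mul]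
                  · rw [if_neg h,
                      if_neg (fun he => h (Finset.sdiff_eq_empty_iff_subset.mp he)), zero_mul]
        _ = ∑ α ∈ (powersetCard k (univ : Finset (Fin v))).filter (fun α => γ ⊆ α), f α := by
            rw [Finset.sum_filter]
    rw [← swap]
    have hkey : ∀ δ ∈ γ.powerset, (-1 : ℂ) ^ δ.card * ∑ α ∈ powersetCard k δᶜ, f α
        = (-1 : ℂ) ^ δ.card * ((-1 : ℂ) ^ k * c δ.card) := by
      intro δ hδ
      have hδc := Finset.card_le_card (Finset.mem_powerset.mp hδ)
      rw [key δ (le_trans hδc hγ) (by omega)]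
    rw [Finset.sum_congr rfl hkey]
    rw [Finset.sum_powerset_apply_card (fun jj => (-1 : ℂ) ^ jj * ((-1 : ℂ) ^ k * c jj))]
    refine Finset.sum_congr rfl fun jj _ => ?_
    rw [nsmul_eq_mul]
  have htk : t < k := by
    by_contra hcon
    push_neg at hcon
    have hconst : ∀ α ∈ powersetCard k (univ : Finset (Fin v)),
        f α = ∑ jj ∈ range (k + 1),
          ((k.choose jj : ℂ)) * ((-1 : ℂ) ^ jj * ((-1 : ℂ) ^ k * c jj)) := by
      intro α hα
      obtain ⟨hαu, hαc⟩ := Finset.mem_powersetCard.mp hα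
      have hsingle : (powersetCard k (univ : Finset (Fin v))).filter (fun s => α ⊆ s) = {α} := by
        ext s
        simp only [Finset.mem_filter, Finset.mem_powersetCard, Finset.mem_singleton]
        constructor
        · rintro ⟨⟨_, hsc⟩, hsub⟩
          exact (Finset.eq_of_subset_of_card_le hsub (by omega)).symm
        · rintro rfl
          exact ⟨⟨Finset.subset_univ _, hαc⟩, Finset.Subset.refl _⟩
      have hUα := hU α (by omega)
      rw [hsingle, Finset.sum_singleton, hαc] at hUα
      exact hUα
    have ha' := hconst αa hαa
    have hb' := hconst αb hαb
    rw [hfa] at ha'; rw [hfb] at hb'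
    exact hab (ha'.trans hb'.symm)
  -- averaging
  have havg : (v.choose t : ℂ) * (∑ jj ∈ range (t + 1),
        ((t.choose jj : ℂ)) * ((-1 : ℂ) ^ jj * ((-1 : ℂ) ^ k * c jj)))
      = ((-1 : ℂ) ^ k * c 0) * (k.choose t : ℂ) := by
    have lhs1 : ∑ β' ∈ powersetCard t (univ : Finset (Fin v)),
        (∑ α ∈ (powersetCard k (univ : Finset (Fin v))).filter (fun α => β' ⊆ α), f α)
        = (v.choose t : ℂ) * (∑ jj ∈ range (t + 1),
            ((t.choose jj : ℂ)) * ((-1 : ℂ) ^ jj * ((-1 : ℂ) ^ k * c jj))) := by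
      rw [Finset.sum_congr rfl (fun β' hβ' => by
        have hc := (Finset.mem_powersetCard.mp hβ').2
        rw [hU β' (le_of_eq hc), hc])]
      rw [Finset.sum_const, Finset.card_powersetCard, Finset.card_univ, Fintype.card_fin,
        nsmul_eq_mul]
    have lhs2 : ∑ β' ∈ powersetCard t (univ : Finset (Fin v)),
        (∑ α ∈ (powersetCard k (univ : Finset (Fin v))).filter (fun α => β' ⊆ α), f α)
        = (∑ α ∈ powersetCard k (univ : Finset (Fin v)), f α) * (k.choose t : ℂ) := by
      calc ∑ β' ∈ powersetCard t (univ : Finset (Fin v)),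
            (∑ α ∈ (powersetCard k (univ : Finset (Fin v))).filter (fun α => β' ⊆ α), f α)
          = ∑ β' ∈ powersetCard t (univ : Finset (Fin v)),
              ∑ α ∈ powersetCard k (univ : Finset (Fin v)), (if β' ⊆ α then f α else 0) := by
            refine Finset.sum_congr rfl fun β' _ => ?_; rw [Finset.sum_filter]
        _ = ∑ α ∈ powersetCard k (univ : Finset (Fin v)),
              ∑ β' ∈ powersetCard t (univ : Finset (Fin v)), (if β' ⊆ α then f α else 0) :=
            Finset.sum_comm
        _ = ∑ α ∈ powersetCard k (univ : Finset (Fin v)), f α * (k.choose t : ℂ) := by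
            refine Finset.sum_congr rfl fun α hα => ?_
            have hαc := (Finset.mem_powersetCard.mp hα).2
            have hfilt : (powersetCard t (univ : Finset (Fin v))).filter (fun β' => β' ⊆ α)
                = powersetCard t α := by
              ext δ
              simp only [Finset.mem_filter, Finset.mem_powersetCard]
              constructor
              · intro h; exact ⟨h.2, h.1.2⟩
              · intro h; exact ⟨⟨Finset.subset_univ _, h.2⟩, h.1⟩
            rw [← Finset.sum_filter, hfilt, Finset.sum_const, Finset.card_powersetCard, hαc,
              nsmul_eq_mul, mul_comm]
        _ = (∑ α ∈ powersetCard k (univ : Finset (Fin v)), f α) * (k.choose t : ℂ) := by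
            rw [Finset.sum_mul]
    have hsum0 : ∑ α ∈ powersetCard k (univ : Finset (Fin v)), f α = (-1 : ℂ) ^ k * c 0 := by
      have hkey := key ∅ (by simp only [Finset.card_empty]; omega) (by simp only [Finset.card_empty]; omega)
      rw [Finset.compl_empty, Finset.card_empty] at hkey
      exact hkey
    rw [← lhs1, lhs2, hsum0]
  -- final count
  set P := (powersetCard k (univ : Finset (Fin v))).filter (fun s => β ⊆ s ∧ f s = a) with hP
  set P' := (powersetCard k (univ : Finset (Fin v))).filter (fun s => β ⊆ s ∧ f s ≠ a) with hP'
  have hsplit : (powersetCard k (univ : Finset (Fin v))).filter (fun s => β ⊆ s) = P ∪ P' := by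
    rw [hP, hP']
    ext s
    simp only [Finset.mem_filter, Finset.mem_union]
    tauto
  have hdisj : Disjoint P P' := by
    rw [Finset.disjoint_left]
    intro s hs hs'
    rw [hP, Finset.mem_filter] at hs
    rw [hP', Finset.mem_filter] at hs'
    exact hs'.2.2 hs.2.2
  have hsum : ∑ α ∈ (powersetCard k (univ : Finset (Fin v))).filter (fun s => β ⊆ s), f α
      = a * P.card + b * P'.card := by
    rw [hsplit, Finset.sum_union hdisj]
    congr 1
    · have hPa : ∀ s ∈ P, f s = a := fun s hs => ((Finset.mem_filter.mp hs).2).2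
      rw [Finset.sum_congr rfl hPa, Finset.sum_const, nsmul_eq_mul, mul_comm]
    · have hPb : ∀ s ∈ P', f s = b := by
        intro s hs
        obtain ⟨hs1, hs2⟩ := Finset.mem_filter.mp hs
        rcases hmem s hs1 with h | h
        · exact absurd h hs2.2
        · exact h
      rw [Finset.sum_congr rfl hPb, Finset.sum_const, nsmul_eq_mul, mul_comm]
  have hUB := hU β (le_of_eq hβ)
  rw [hβ] at hUB
  have hcards : P.card + P'.card = (v - t).choose (k - t) := by
    have hcs := card_supersets β k (by omega)
    rw [hβ, Fintype.card_fin] at hcs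
    rw [← hcs, hsplit, Finset.card_union_of_disjoint hdisj]
  have hN' : (P'.card : ℂ) = ((v - t).choose (k - t) : ℂ) - (P.card : ℂ) := by
    have hc2 : ((P.card + P'.card : ℕ) : ℂ) = (((v - t).choose (k - t) : ℕ) : ℂ) := by
      rw [hcards]
    push_cast at hc2
    linear_combination hc2
  have heq : (a - b) * (P.card : ℂ)
      = (∑ jj ∈ range (t + 1), ((t.choose jj : ℂ)) * ((-1 : ℂ) ^ jj * ((-1 : ℂ) ^ k * c jj)))
        - b * ((v - t).choose (k - t) : ℂ) := by
    rw [hsum] at hUB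
    linear_combination hUB - b * hN'
  have hvt0 : (v.choose t : ℂ) ≠ 0 :=
    Nat.cast_ne_zero.mpr (Nat.choose_pos (by omega)).ne'
  have hab0 : a - b ≠ 0 := sub_ne_zero.mpr hab
  field_simp
  linear_combination (v.choose t : ℂ) * heq + havg
end

section
/- Let $S$ be a $4 \times 4$ real symmetric matrix with zero diagonal whose off-diagonal entries all lie in $\{-1,1\}$. Then $\det(S) \in \{-3, 5\}$. -/
open Matrix

/-- The determinant of a `4 × 4` symmetric Seidel matrix is `-3` or `5`. -/
theorem det_sym_seidel_four (S : Matrix (Fin 4) (Fin 4) ℝ)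
    (hdiag : ∀ i, S i i = 0)
    (hoff : ∀ i j, i ≠ j → S i j = 1 ∨ S i j = -1)
    (hsym : Sᵀ = S) :
    S.det = -3 ∨ S.det = 5 := by
  have e10 : S 1 0 = S 0 1 := (congrFun (congrFun hsym 1) 0).symm
  have e20 : S 2 0 = S 0 2 := (congrFun (congrFun hsym 2) 0).symm
  have e30 : S 3 0 = S 0 3 := (congrFun (congrFun hsym 3) 0).symm
  have e21 : S 2 1 = S 1 2 := (congrFun (congrFun hsym 2) 1).symm
  have e31 : S 3 1 = S 1 3 := (congrFun (congrFun hsym 3) 1).symm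
  have e32 : S 3 2 = S 2 3 := (congrFun (congrFun hsym 3) 2).symm
  have hdet : S.det = S 0 1 ^ 2 * S 2 3 ^ 2 + S 0 2 ^ 2 * S 1 3 ^ 2 +
      S 0 3 ^ 2 * S 1 2 ^ 2 - 2 * S 0 1 * S 0 3 * S 1 2 * S 2 3 -
      2 * S 0 1 * S 0 2 * S 1 3 * S 2 3 - 2 * S 0 2 * S 0 3 * S 1 2 * S 1 3 := by
    have hs : (Fin.succ 2 : Fin 4) = 3 := rfl
    have hc : (Fin.castSucc 2 : Fin 4) = 2 := rfl
    simp [hs, hc, Matrix.det_succ_row_zero, Fin.sum_univ_succ, Fin.succAbove,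
      hdiag, e10, e20, e30, e21, e31, e32]
    ring
  rw [hdet]
  rcases hoff 0 1 (by decide) with h01 | h01 <;>
  rcases hoff 0 2 (by decide) with h02 | h02 <;>
  rcases hoff 0 3 (by decide) with h03 | h03 <;>
  rcases hoff 1 2 (by decide) with h12 | h12 <;>
  rcases hoff 1 3 (by decide) with h13 | h13 <;>
  rcases hoff 2 3 (by decide) with h23 | h23 <;>
  rw [h01, h02, h03, h12, h13, h23] <;> norm_num
end

section
/- Let $T$ be a $5 \times 5$ real skew-symmetric matrix with zero diagonal and off-diagonal entries in $\{-1,1\}$. Then the number of $4$-element subsets $\alpha \subseteq \{1,\dots,5\}$ with $\det(T[\alpha]) = 9$ is either $0$ or $2$. -/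
open Matrix Finset
open scoped Classical

def sv (b : Bool) : ℤ := if b then 1 else -1

lemma key_count (A B C D E F G H I J : Bool) :
    ((if (sv A * sv H - sv B * sv F + sv C * sv E)^2 = 9 then 1 else 0) +
     ((if (sv A * sv I - sv B * sv G + sv D * sv E)^2 = 9 then 1 else 0) +
      ((if (sv A * sv J - sv C * sv G + sv D * sv F)^2 = 9 then 1 else 0) +
       ((if (sv B * sv J - sv C * sv I + sv D * sv H)^2 = 9 then 1 else 0) +
        (if (sv E * sv J - sv F * sv I + sv G * sv H)^2 = 9 then 1 else 0))))) = 0 ∨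
    ((if (sv A * sv H - sv B * sv F + sv C * sv E)^2 = 9 then 1 else 0) +
     ((if (sv A * sv I - sv B * sv G + sv D * sv E)^2 = 9 then 1 else 0) +
      ((if (sv A * sv J - sv C * sv G + sv D * sv F)^2 = 9 then 1 else 0) +
       ((if (sv B * sv J - sv C * sv I + sv D * sv H)^2 = 9 then 1 else 0) +
        (if (sv E * sv J - sv F * sv I + sv G * sv H)^2 = 9 then 1 else 0))))) = 2 := by
  revert A B C D E F G H I J
  decide

lemma det_sub4 (T : Matrix (Fin 5) (Fin 5) ℝ) (hdiag : ∀ i, T i i = 0)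
    (hskew : Tᵀ = -T) (g : Fin 4 → Fin 5) :
    (T.submatrix g g).det =
      (T (g 0) (g 1) * T (g 2) (g 3) - T (g 0) (g 2) * T (g 1) (g 3) +
        T (g 0) (g 3) * T (g 1) (g 2))^2 := by
  have hs : ∀ p q, T q p = -T p q := fun p q => by
    simpa using congrFun (congrFun hskew p) q
  have hM : T.submatrix g g =
      !![0, T (g 0) (g 1), T (g 0) (g 2), T (g 0) (g 3);
         -T (g 0) (g 1), 0, T (g 1) (g 2), T (g 1) (g 3);
         -T (g 0) (g 2), -T (g 1) (g 2), 0, T (g 2) (g 3);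
         -T (g 0) (g 3), -T (g 1) (g 3), -T (g 2) (g 3), 0] := by
    ext i j
    fin_cases i <;> fin_cases j <;>
      simp only [Matrix.submatrix_apply, Matrix.cons_val', Matrix.cons_val_zero,
        Matrix.cons_val_one, Matrix.head_cons, Matrix.head_fin_const, Matrix.empty_val',
        Matrix.cons_val_fin_one, Matrix.of_apply] <;>
      first
        | exact hdiag _
        | exact hs _ _
        | rfl
  rw [hM]
  simp [Matrix.det_succ_row_zero, Fin.sum_univ_succ, Fin.succAbove, Fin.castSucc,
    Fin.castAdd, Fin.castLE]
  ring

lemma det_principal (T : Matrix (Fin 5) (Fin 5) ℝ) (s : Finset (Fin 5)) (g : Fin 4 → Fin 5)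
    (hmem : ∀ i, g i ∈ s) (hinj : Function.Injective g) (hcard : s.card = 4) :
    (principalSub T s).det = (T.submatrix g g).det := by
  have hcardT : Fintype.card s = 4 := by rw [Fintype.card_coe, hcard]
  let e' : Fin 4 → s := fun i => ⟨g i, hmem i⟩
  have hinj' : Function.Injective e' := fun i j hij => hinj (congrArg Subtype.val hij)
  have hbij : Function.Bijective e' :=
    (Fintype.bijective_iff_injective_and_card e').2 ⟨hinj', by simp [hcardT]⟩
  rw [← Matrix.det_submatrix_equiv_self (Equiv.ofBijective e' hbij) (principalSub T s)]
  rfl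

/-- For a `5 × 5` skew-symmetric Seidel matrix `T`, the number of `4`-subsets `α`
with `det T[α] = 9` is `0` or `2`. -/
theorem count_det_nine_skew_seidel_five (T : Matrix (Fin 5) (Fin 5) ℝ)
    (hdiag : ∀ i, T i i = 0)
    (hoff : ∀ i j, i ≠ j → T i j = 1 ∨ T i j = -1)
    (hskew : Tᵀ = -T) :
    ((Finset.powersetCard 4 (Finset.univ : Finset (Fin 5))).filter
        fun s => (principalSub T s).det = 9).card = 0 ∨
    ((Finset.powersetCard 4 (Finset.univ : Finset (Fin 5))).filter
        fun s => (principalSub T s).det = 9).card = 2 := by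
  have hB : ∀ p q : Fin 5, p ≠ q → ∃ b : Bool, T p q = ((sv b : ℤ) : ℝ) := by
    intro p q hpq
    rcases hoff p q hpq with h | h
    · exact ⟨true, by simp [sv, h]⟩
    · exact ⟨false, by simp [sv, h]⟩
  obtain ⟨A, hA⟩ := hB 0 1 (by decide)
  obtain ⟨B, hBB⟩ := hB 0 2 (by decide)
  obtain ⟨C, hC⟩ := hB 0 3 (by decide)
  obtain ⟨D, hD⟩ := hB 0 4 (by decide)
  obtain ⟨E, hE⟩ := hB 1 2 (by decide)
  obtain ⟨F, hF⟩ := hB 1 3 (by decide)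
  obtain ⟨G, hG⟩ := hB 1 4 (by decide)
  obtain ⟨H, hH⟩ := hB 2 3 (by decide)
  obtain ⟨I, hI⟩ := hB 2 4 (by decide)
  obtain ⟨J, hJ⟩ := hB 3 4 (by decide)
  have hd4 : (principalSub T (univ.erase 4)).det =
      (T 0 1 * T 2 3 - T 0 2 * T 1 3 + T 0 3 * T 1 2)^2 := by
    rw [det_principal T _ ![0,1,2,3] (by decide) (by decide) (by decide),
      det_sub4 T hdiag hskew]
    norm_num
    rfl
  have hd3 : (principalSub T (univ.erase 3)).det =
      (T 0 1 * T 2 4 - T 0 2 * T 1 4 + T 0 4 * T 1 2)^2 := by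
    rw [det_principal T _ ![0,1,2,4] (by decide) (by decide) (by decide),
      det_sub4 T hdiag hskew]
    norm_num
    rfl
  have hd2 : (principalSub T (univ.erase 2)).det =
      (T 0 1 * T 3 4 - T 0 3 * T 1 4 + T 0 4 * T 1 3)^2 := by
    rw [det_principal T _ ![0,1,3,4] (by decide) (by decide) (by decide),
      det_sub4 T hdiag hskew]
    norm_num
    rfl
  have hd1 : (principalSub T (univ.erase 1)).det =
      (T 0 2 * T 3 4 - T 0 3 * T 2 4 + T 0 4 * T 2 3)^2 := by
    rw [det_principal T _ ![0,2,3,4] (by decide) (by decide) (by decide),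
      det_sub4 T hdiag hskew]
    norm_num
    rfl
  have hd0 : (principalSub T (univ.erase 0)).det =
      (T 1 2 * T 3 4 - T 1 3 * T 2 4 + T 1 4 * T 2 3)^2 := by
    rw [det_principal T _ ![1,2,3,4] (by decide) (by decide) (by decide),
      det_sub4 T hdiag hskew]
    norm_num
    rfl
  have hset : (Finset.powersetCard 4 (Finset.univ : Finset (Fin 5))) =
      {univ.erase 4, univ.erase 3, univ.erase 2, univ.erase 1, univ.erase 0} := by decide
  rw [Finset.card_filter, hset]
  rw [Finset.sum_insert (by decide), Finset.sum_insert (by decide),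
    Finset.sum_insert (by decide), Finset.sum_insert (by decide), Finset.sum_singleton]
  rw [hd4, hd3, hd2, hd1, hd0, hA, hBB, hC, hD, hE, hF, hG, hH, hI, hJ]
  have cast9 : ∀ x : ℤ, (((x : ℝ))^2 = 9 ↔ x^2 = 9) := by
    intro x
    constructor
    · intro hx; exact_mod_cast hx
    · intro hx; exact_mod_cast hx
  have c0 : (((sv A : ℤ):ℝ) * ((sv H : ℤ):ℝ) - ((sv B : ℤ):ℝ) * ((sv F : ℤ):ℝ) +
      ((sv C : ℤ):ℝ) * ((sv E : ℤ):ℝ))^2 = 9 ↔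
      (sv A * sv H - sv B * sv F + sv C * sv E)^2 = 9 := by
    rw [← cast9]; push_cast; ring_nf
  have c1 : (((sv A : ℤ):ℝ) * ((sv I : ℤ):ℝ) - ((sv B : ℤ):ℝ) * ((sv G : ℤ):ℝ) +
      ((sv D : ℤ):ℝ) * ((sv E : ℤ):ℝ))^2 = 9 ↔
      (sv A * sv I - sv B * sv G + sv D * sv E)^2 = 9 := by
    rw [← cast9]; push_cast; ring_nf
  have c2 : (((sv A : ℤ):ℝ) * ((sv J : ℤ):ℝ) - ((sv C : ℤ):ℝ) * ((sv G : ℤ):ℝ) +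
      ((sv D : ℤ):ℝ) * ((sv F : ℤ):ℝ))^2 = 9 ↔
      (sv A * sv J - sv C * sv G + sv D * sv F)^2 = 9 := by
    rw [← cast9]; push_cast; ring_nf
  have c3 : (((sv B : ℤ):ℝ) * ((sv J : ℤ):ℝ) - ((sv C : ℤ):ℝ) * ((sv I : ℤ):ℝ) +
      ((sv D : ℤ):ℝ) * ((sv H : ℤ):ℝ))^2 = 9 ↔
      (sv B * sv J - sv C * sv I + sv D * sv H)^2 = 9 := by
    rw [← cast9]; push_cast; ring_nf
  have c4 : (((sv E : ℤ):ℝ) * ((sv J : ℤ):ℝ) - ((sv F : ℤ):ℝ) * ((sv I : ℤ):ℝ) +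
      ((sv G : ℤ):ℝ) * ((sv H : ℤ):ℝ))^2 = 9 ↔
      (sv E * sv J - sv F * sv I + sv G * sv H)^2 = 9 := by
    rw [← cast9]; push_cast; ring_nf
  simp only [c0, c1, c2, c3, c4]
  exact key_count A B C D E F G H I J
end

section
/- Define matrices $S_d$ recursively by $S_0 = (0)$ (the $1 \times 1$ zero matrix) and $S_{d+1} = \begin{pmatrix} S_d & I \\ I & -S_d \end{pmatrix}$, where $I$ is the identity of order $2^d$. Then for every $d \ge 0$, $S_d^2 = d \cdot I_{2^d}$, and consequently for $d \ge 1$ the characteristic polynomial of $S_d$ is $(x^2 - d)^{2^{d-1}}$. -/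
open Matrix Polynomial

/-- The signed hypercube matrix: `S₀ = (0)` and
`S_{d+1} = [[S_d, I], [I, -S_d]]`, of order `2^d`. -/
def signedCube : (d : ℕ) → Matrix (Fin (2 ^ d)) (Fin (2 ^ d)) ℝ
  | 0 => 0
  | d + 1 =>
      Matrix.reindex (finSumFinEquiv.trans (finCongr (by rw [pow_succ, mul_two])))
        (finSumFinEquiv.trans (finCongr (by rw [pow_succ, mul_two])))
        (Matrix.fromBlocks (signedCube d) 1 1 (-(signedCube d)))

lemma signedCube_sq : ∀ d : ℕ, signedCube d ^ 2 = (d : ℝ) • 1 := by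
  intro d
  induction d with
  | zero => simp [signedCube]
  | succ d ih =>
    rw [pow_two] at ih ⊢
    rw [signedCube, Matrix.reindex_apply, Matrix.submatrix_mul_equiv,
      Matrix.fromBlocks_multiply]
    simp only [Matrix.mul_one, Matrix.one_mul, Matrix.neg_mul, Matrix.mul_neg, neg_neg,
      add_neg_cancel, ih]
    have h1 : ((d : ℝ)) • (1 : Matrix (Fin (2^d)) (Fin (2^d)) ℝ) + 1
        = ((d + 1 : ℕ) : ℝ) • 1 := by
      push_cast
      rw [add_smul, one_smul]
    have h2 : (1 : Matrix (Fin (2^d)) (Fin (2^d)) ℝ) + ((d : ℝ)) • 1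
        = ((d + 1 : ℕ) : ℝ) • 1 := by rw [add_comm]; exact h1
    rw [h1, h2]
    have : (Matrix.fromBlocks (((d+1:ℕ):ℝ) • (1 : Matrix (Fin (2^d)) (Fin (2^d)) ℝ)) 0 0
        (((d+1:ℕ):ℝ) • (1 : Matrix (Fin (2^d)) (Fin (2^d)) ℝ)))
        = ((d+1:ℕ):ℝ) • (1 : Matrix (Fin (2^d) ⊕ Fin (2^d)) (Fin (2^d) ⊕ Fin (2^d)) ℝ) := by
      rw [← Matrix.fromBlocks_one, Matrix.fromBlocks_smul]
      simp
    rw [this]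
    ext i j
    simp [Matrix.one_apply]

lemma charpoly_conj_aux {n : Type*} [Fintype n] [DecidableEq n] (P Q M : Matrix n n ℝ)
    (h1 : P * Q = 1) : (P * M * Q).charpoly = M.charpoly := by
  have hmap : P.map C * Q.map C = 1 := by
    rw [← Matrix.map_mul, h1, Matrix.map_one C (map_zero C) (map_one C)]
  have key : charmatrix (P * M * Q) = P.map C * charmatrix M * Q.map C := by
    rw [charmatrix, charmatrix]
    rw [Matrix.mul_sub, Matrix.sub_mul]
    congr 1
    · rw [← (Matrix.scalar_commute (X : ℝ[X]) (fun r => Commute.all _ r) (P.map C)).eq,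
        Matrix.mul_assoc, hmap, Matrix.mul_one]
    · simp only [RingHom.mapMatrix_apply, Matrix.map_mul]
  rw [Matrix.charpoly, key, Matrix.det_mul, Matrix.det_mul, Matrix.charpoly]
  have hdet : (P.map C).det * (Q.map C).det = 1 := by
    rw [← Matrix.det_mul, hmap, Matrix.det_one]
  calc (P.map C).det * (charmatrix M).det * (Q.map C).det
      = (P.map C).det * (Q.map C).det * (charmatrix M).det := by ring
    _ = (charmatrix M).det := by rw [hdet, one_mul]

lemma charpoly_of_sq {N k : ℕ} (hN : N = 2 * k) (M : Matrix (Fin N) (Fin N) ℝ) (c : ℝ)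
    (hM : M ^ 2 = c • 1) (hneg : (-M).charpoly = M.charpoly) :
    M.charpoly = (X ^ 2 - C c) ^ k := by
  have hq : ((X:ℝ[X]) ^ 2 - C c).Monic := monic_X_pow_sub_C c two_ne_zero
  have hmapsq : (M.map C) * (M.map C) = C c • 1 := by
    rw [← Matrix.map_mul, ← pow_two, hM]
    ext i j
    by_cases h : i = j <;> simp [h, Matrix.one_apply, Matrix.map_apply]
  have hnegmap : ((-M).map C) = -(M.map C) := by
    ext i j; simp [Matrix.map_apply]
  have hcomm := (Matrix.scalar_commute (X : ℝ[X]) (fun r => Commute.all _ r) (M.map C)).eq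
  have hprod : charmatrix M * charmatrix (-M) = ((X:ℝ[X]) ^ 2 - C c) • 1 := by
    rw [charmatrix, charmatrix]
    simp only [RingHom.mapMatrix_apply, hnegmap, sub_neg_eq_add]
    have expand : ((Matrix.scalar (Fin N)) X - M.map C) * ((Matrix.scalar (Fin N)) X + M.map C)
        = (Matrix.scalar (Fin N)) X * (Matrix.scalar (Fin N)) X - (M.map C) * (M.map C) := by
      rw [Matrix.sub_mul, Matrix.mul_add, Matrix.mul_add, hcomm]
      abel
    rw [expand, ← map_mul (Matrix.scalar (Fin N)), ← pow_two, hmapsq]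
    ext i j
    by_cases h : i = j <;> simp [h, Matrix.scalar_apply, Matrix.one_apply, Matrix.diagonal_apply]
  have hdet : M.charpoly * (-M).charpoly = ((X:ℝ[X]) ^ 2 - C c) ^ N := by
    rw [Matrix.charpoly, Matrix.charpoly, ← Matrix.det_mul, hprod, Matrix.det_smul,
      Matrix.det_one, mul_one, Fintype.card_fin]
  rw [hneg, ← pow_two] at hdet
  have hq2 : ((X:ℝ[X]) ^ 2 - C c) ^ N = (((X:ℝ[X]) ^ 2 - C c) ^ k) ^ 2 := by
    rw [← pow_mul, hN, mul_comm]
  rw [hq2] at hdet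
  set p := M.charpoly with hp_def
  set q := ((X:ℝ[X]) ^ 2 - C c) ^ k with hq_def
  have h0 : (p - q) * (p + q) = 0 := by linear_combination hdet
  rcases mul_eq_zero.mp h0 with h | h
  · exact sub_eq_zero.mp h
  · exfalso
    have hp : p.Monic := M.charpoly_monic
    have hqm : q.Monic := hq.pow _
    have hpq : p = -q := eq_neg_of_add_eq_zero_left h
    have : p.leadingCoeff = -q.leadingCoeff := by rw [hpq, leadingCoeff_neg]
    rw [hp.leadingCoeff, hqm.leadingCoeff] at this
    norm_num at this

lemma conj_helper {m n : Type*} [Fintype m] [DecidableEq m] [Fintype n] [DecidableEq n]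
    (e : m ⊕ m ≃ n) (S : Matrix m m ℝ) :
    (-(Matrix.reindex e e (Matrix.fromBlocks S 1 1 (-S)))).charpoly
      = (Matrix.reindex e e (Matrix.fromBlocks S 1 1 (-S))).charpoly := by
  set P := Matrix.reindex e e (Matrix.fromBlocks (0 : Matrix m m ℝ) 1 (-1) 0) with hP
  set Q := Matrix.reindex e e (Matrix.fromBlocks (0 : Matrix m m ℝ) (-1) 1 0) with hQ
  have hPQ : P * Q = 1 := by
    simp [hP, hQ, Matrix.reindex_apply, Matrix.submatrix_mul_equiv,
      Matrix.fromBlocks_multiply, Matrix.fromBlocks_one]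
  have hconj : P * (Matrix.reindex e e (Matrix.fromBlocks S 1 1 (-S))) * Q
      = -(Matrix.reindex e e (Matrix.fromBlocks S 1 1 (-S))) := by
    have inner : (Matrix.fromBlocks (0 : Matrix m m ℝ) 1 (-1) 0 * Matrix.fromBlocks S 1 1 (-S))
        * Matrix.fromBlocks (0 : Matrix m m ℝ) (-1) 1 0 = -(Matrix.fromBlocks S 1 1 (-S)) := by
      rw [Matrix.fromBlocks_multiply, Matrix.fromBlocks_multiply]
      ext (i|i) (j|j) <;> simp
    simp only [hP, hQ, Matrix.reindex_apply, Matrix.submatrix_mul_equiv, inner]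
    ext i j
    simp
  rw [← hconj, charpoly_conj_aux _ _ _ hPQ]

lemma signedCube_neg_charpoly (k : ℕ) :
    (-(signedCube (k+1))).charpoly = (signedCube (k+1)).charpoly := by
  rw [signedCube]
  exact conj_helper _ _

/-- `S_d² = d·I`, and for `d ≥ 1` the characteristic polynomial of `S_d`
is `(x² - d)^(2^(d-1))`. -/
theorem signedCube_sq_and_charpoly :
    (∀ d : ℕ, signedCube d ^ 2 = (d : ℝ) • 1) ∧
    (∀ d : ℕ, 1 ≤ d →
      (signedCube d).charpoly = (X ^ 2 - C (d : ℝ)) ^ 2 ^ (d - 1)) := by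
  refine ⟨signedCube_sq, ?_⟩
  intro d hd
  obtain ⟨k, rfl⟩ : ∃ k, d = k + 1 := ⟨d - 1, (Nat.succ_pred_eq_of_pos hd).symm⟩
  have hN : 2 ^ (k + 1) = 2 * 2 ^ k := by rw [pow_succ, mul_comm]
  have := charpoly_of_sq hN (signedCube (k + 1)) (((k + 1 : ℕ) : ℝ))
    (signedCube_sq (k + 1)) (signedCube_neg_charpoly k)
  simpa using this
end
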